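/- arXiv:2202.08321 — 4 statements merged into one kernel-verified Lean document; each statement's English description precedes it below -/
import Mathlib

section
/- There exists a constant c > 0 such that for all positive integers n and m, |λ_n − λ_m| ≥ c·|n − m|^{3/2}, where λ_n = −i·(n(g + n²)·tanh(hn))^{1/2} are the eigenvalues of the linearized water-wave operator. -/
lemma tanh_mono' {a b : ℝ} (hab : a ≤ b) : Real.tanh a ≤ Real.tanh b := by
  rw [Real.tanh_eq_sinh_div_cosh, Real.tanh_eq_sinh_div_cosh,
    div_le_div_iff₀ (Real.cosh_pos a) (Real.cosh_pos b)]
  have h1 : Real.sinh (a - b) ≤ 0 := Real.sinh_nonpos_iff.2 (sub_nonpos.2 hab)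
  have h2 := Real.sinh_sub a b
  linarith

lemma tanh_pos' {x : ℝ} (hx : 0 < x) : 0 < Real.tanh x := by
  rw [Real.tanh_eq_sinh_div_cosh]
  exact div_pos (Real.sinh_pos_iff.2 hx) (Real.cosh_pos x)

lemma tanh_le_one' (x : ℝ) : Real.tanh x ≤ 1 := by
  rw [Real.tanh_eq_sinh_div_cosh]
  exact (div_le_one (Real.cosh_pos x)).2 (Real.sinh_lt_cosh x).le

set_option maxHeartbeats 1000000 in
lemma key_gap (g h rm rn : ℝ) (hg : 0 < g) (hh : 0 < h)
    (hm1 : 1 ≤ rm) (hmn' : rm + 1 ≤ rn) :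
    Real.tanh h / (2 * Real.sqrt (g + 1)) * (rn - rm) ^ ((3 : ℝ) / 2)
      ≤ Real.sqrt (rn * (g + rn ^ 2) * Real.tanh (h * rn))
        - Real.sqrt (rm * (g + rm ^ 2) * Real.tanh (h * rm)) := by
  have ht : 0 < Real.tanh h := tanh_pos' hh
  have hsg : 0 < Real.sqrt (g + 1) := Real.sqrt_pos.2 (by linarith)
  have hn1 : (1 : ℝ) ≤ rn := by linarith
  have hd : (0 : ℝ) < rn - rm := by linarith
  have htn : Real.tanh h ≤ Real.tanh (h * rn) := tanh_mono' (by nlinarith)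
  have htm : Real.tanh h ≤ Real.tanh (h * rm) := tanh_mono' (by nlinarith)
  have htmn : Real.tanh (h * rm) ≤ Real.tanh (h * rn) := tanh_mono' (by nlinarith)
  have ht1 : Real.tanh (h * rn) ≤ 1 := tanh_le_one' _
  have htm0 : 0 < Real.tanh (h * rm) := lt_of_lt_of_le ht htm
  have htn0 : 0 < Real.tanh (h * rn) := lt_of_lt_of_le ht htn
  have hBpos : 0 < rm * (g + rm ^ 2) := by nlinarith
  have hApos : 0 < rn * (g + rn ^ 2) := by nlinarith
  have hcube : rm ^ 3 ≤ rn ^ 3 :=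
    pow_le_pow_left₀ (by linarith) (by linarith) 3
  have hsq : rm ^ 2 ≤ rn ^ 2 := pow_le_pow_left₀ (by linarith) (by linarith) 2
  have hA : rm * (g + rm ^ 2) ≤ rn * (g + rn ^ 2) := by nlinarith
  have hAB : (rn - rm) * rn ^ 2 ≤ rn * (g + rn ^ 2) - rm * (g + rm ^ 2) := by
    nlinarith [mul_nonneg (by linarith : (0:ℝ) ≤ rm) (sub_nonneg.2 hsq),
      mul_pos hg hd]
  have hFm0 : 0 ≤ rm * (g + rm ^ 2) * Real.tanh (h * rm) :=
    mul_nonneg hBpos.le htm0.le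
  have hdiff : Real.tanh h * ((rn - rm) * rn ^ 2) ≤
      rn * (g + rn ^ 2) * Real.tanh (h * rn) - rm * (g + rm ^ 2) * Real.tanh (h * rm) := by
    nlinarith [mul_nonneg (sub_nonneg.2 htmn) hApos.le,
      mul_le_mul_of_nonneg_right htm (sub_nonneg.2 hA),
      mul_le_mul_of_nonneg_left hAB ht.le]
  have hFmn : rm * (g + rm ^ 2) * Real.tanh (h * rm) ≤
      rn * (g + rn ^ 2) * Real.tanh (h * rn) := by
    nlinarith [mul_pos ht (mul_pos hd (by nlinarith : (0:ℝ) < rn ^ 2))]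
  have hrn3 : rn ≤ rn ^ 3 := by
    nlinarith [mul_nonneg (mul_nonneg (sub_nonneg.2 hn1) (by linarith : (0:ℝ) ≤ rn + 1))
      (by linarith : (0:ℝ) ≤ rn)]
  have hFnle : rn * (g + rn ^ 2) * Real.tanh (h * rn) ≤ (g + 1) * rn ^ 3 := by
    nlinarith [mul_le_mul_of_nonneg_left ht1 hApos.le, mul_le_mul_of_nonneg_left hrn3 hg.le]
  set a : ℝ := Real.sqrt (rn * (g + rn ^ 2) * Real.tanh (h * rn)) with ha
  set b : ℝ := Real.sqrt (rm * (g + rm ^ 2) * Real.tanh (h * rm)) with hb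
  have ha2 : a ^ 2 = rn * (g + rn ^ 2) * Real.tanh (h * rn) :=
    Real.sq_sqrt (le_trans hFm0 hFmn)
  have hb2 : b ^ 2 = rm * (g + rm ^ 2) * Real.tanh (h * rm) := Real.sq_sqrt hFm0
  have hb0 : 0 ≤ b := Real.sqrt_nonneg _
  have hba : b ≤ a := Real.sqrt_le_sqrt hFmn
  have hs2 : Real.sqrt rn ^ 2 = rn := Real.sq_sqrt (by linarith)
  have hs0 : 0 < Real.sqrt rn := Real.sqrt_pos.2 (by linarith)
  have hu2 : Real.sqrt (rn - rm) ^ 2 = rn - rm := Real.sq_sqrt hd.le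
  have hu0 : 0 ≤ Real.sqrt (rn - rm) := Real.sqrt_nonneg _
  have hus : Real.sqrt (rn - rm) ≤ Real.sqrt rn := Real.sqrt_le_sqrt (by linarith)
  have haD : a ≤ Real.sqrt (g + 1) * (rn * Real.sqrt rn) := by
    have h1 : a ≤ Real.sqrt ((g + 1) * rn ^ 3) := Real.sqrt_le_sqrt hFnle
    have h2 : Real.sqrt ((g + 1) * rn ^ 3) = Real.sqrt (g + 1) * (rn * Real.sqrt rn) := by
      rw [Real.sqrt_mul (by linarith)]
      congr 1
      rw [show rn ^ 3 = rn ^ 2 * rn by ring, Real.sqrt_mul (sq_nonneg _),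
        Real.sqrt_sq (by linarith)]
    linarith [h2 ▸ h1]
  have hd32 : (rn - rm) ^ ((3 : ℝ) / 2) = (rn - rm) * Real.sqrt (rn - rm) := by
    rw [show (3 : ℝ) / 2 = 1 + 1 / 2 by norm_num, Real.rpow_add hd, Real.rpow_one,
      ← Real.sqrt_eq_rpow]
  rw [hd32]
  have hDpos : 0 < 2 * Real.sqrt (g + 1) * (rn * Real.sqrt rn) := by positivity
  have hmul : Real.tanh h / (2 * Real.sqrt (g + 1)) * ((rn - rm) * Real.sqrt (rn - rm)) *
        (2 * Real.sqrt (g + 1) * (rn * Real.sqrt rn)) ≤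
      (a - b) * (2 * Real.sqrt (g + 1) * (rn * Real.sqrt rn)) := by
    have hL : Real.tanh h / (2 * Real.sqrt (g + 1)) * ((rn - rm) * Real.sqrt (rn - rm)) *
          (2 * Real.sqrt (g + 1) * (rn * Real.sqrt rn)) =
        Real.tanh h * ((rn - rm) * (Real.sqrt (rn - rm) * Real.sqrt rn)) * rn := by
      field_simp
    have hus2 : Real.sqrt (rn - rm) * Real.sqrt rn ≤ rn := by nlinarith
    have hL2 : Real.tanh h * ((rn - rm) * (Real.sqrt (rn - rm) * Real.sqrt rn)) * rn ≤
        Real.tanh h * ((rn - rm) * rn ^ 2) := by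
      nlinarith [mul_le_mul_of_nonneg_left hus2
        (mul_nonneg (mul_nonneg ht.le hd.le) (by linarith : (0:ℝ) ≤ rn))]
    have h1 : (a - b) * (a + b) =
        rn * (g + rn ^ 2) * Real.tanh (h * rn) - rm * (g + rm ^ 2) * Real.tanh (h * rm) := by
      nlinarith
    have h2 : a + b ≤ 2 * Real.sqrt (g + 1) * (rn * Real.sqrt rn) := by linarith
    nlinarith [sub_nonneg.2 hba]
  exact le_of_mul_le_mul_right hmul hDpos

/-- Eigenvalue gap bound: |λ_n − λ_m| ≥ c·|n − m|^{3/2} for the water-wave eigenvalues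
λ_n = −i·(n(g + n²)·tanh(hn))^{1/2}. -/
theorem stmt0 (g h : ℝ) (hg : 0 < g) (hh : 0 < h)
    (lam : ℕ → ℂ)
    (hlam : ∀ n : ℕ, lam n =
      -Complex.I * Real.sqrt ((n : ℝ) * (g + (n : ℝ) ^ 2) * Real.tanh (h * n))) :
    ∃ c : ℝ, 0 < c ∧ ∀ n m : ℕ, 0 < n → 0 < m →
      c * |(n : ℝ) - (m : ℝ)| ^ ((3 : ℝ) / 2) ≤ ‖lam n - lam m‖ := by
  have ht : 0 < Real.tanh h := tanh_pos' hh
  have hsg : 0 < Real.sqrt (g + 1) := Real.sqrt_pos.2 (by linarith)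
  refine ⟨Real.tanh h / (2 * Real.sqrt (g + 1)), div_pos ht (by positivity), ?_⟩
  have habs : ∀ p q : ℕ, ‖lam p - lam q‖ =
      |Real.sqrt ((p : ℝ) * (g + (p : ℝ) ^ 2) * Real.tanh (h * p))
        - Real.sqrt ((q : ℝ) * (g + (q : ℝ) ^ 2) * Real.tanh (h * q))| := by
    intro p q
    rw [hlam p, hlam q, ← mul_sub, norm_mul, ← Complex.ofReal_sub, Complex.norm_real]
    simp
  have main : ∀ n m : ℕ, 0 < m → m < n →
      Real.tanh h / (2 * Real.sqrt (g + 1)) * |(n : ℝ) - (m : ℝ)| ^ ((3 : ℝ) / 2)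
        ≤ ‖lam n - lam m‖ := by
    intro n m hm hmn
    have hm1 : (1 : ℝ) ≤ (m : ℝ) := by exact_mod_cast Nat.one_le_iff_ne_zero.2 hm.ne'
    have hmn' : (m : ℝ) + 1 ≤ (n : ℝ) := by exact_mod_cast Nat.succ_le_of_lt hmn
    have h1 := key_gap g h (m : ℝ) (n : ℝ) hg hh hm1 hmn'
    rw [habs n m]
    rw [abs_of_pos (by linarith : (0 : ℝ) < (n : ℝ) - (m : ℝ))]
    exact h1.trans (le_abs_self _)
  intro n m hn hm
  rcases lt_trichotomy n m with hlt | heq | hgt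
  · rw [abs_sub_comm, norm_sub_rev]
    exact main m n hn hlt
  · subst heq
    simp [Real.zero_rpow (by norm_num : (3 : ℝ) / 2 ≠ 0)]
  · exact main n m hm hgt
end

section
/- Let (μ_n)_{n ∈ ℕ*} be a sequence of distinct complex numbers, all with real part zero, and let λ > 0 be real. Suppose (d_n)_{n ∈ ℕ*} is a square-summable complex sequence, set r_n := 1/(μ_n + λ/2), and suppose ∑_{n} d_n · r_n^m = 0 for every integer m ≥ 1. If |μ_n| → ∞, then d_n = 0 for all n. -/
/-- Vanishing of all power sums ∑ d_n r_n^m, r_n = (μ_n + λ/2)^{-1}, forces d ≡ 0. -/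
theorem stmt10 (μ : ℕ → ℂ) (hinj : Function.Injective μ)
    (hre : ∀ n, (μ n).re = 0)
    (lam : ℝ) (hlam : 0 < lam)
    (htend : Filter.Tendsto (fun n => ‖μ n‖) Filter.atTop Filter.atTop)
    (d : ℕ → ℂ) (hd : Summable (fun n => ‖d n‖ ^ 2))
    (r : ℕ → ℂ) (hr : ∀ n, r n = (μ n + (lam : ℂ) / 2)⁻¹)
    (hsum : ∀ m : ℕ, 1 ≤ m → HasSum (fun n => d n * r n ^ m) 0) :
    ∀ n, d n = 0 := by
  -- Basic facts about r
  have hne : ∀ n, μ n + (lam : ℂ) / 2 ≠ 0 := by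
    intro n h
    have h1 : (μ n + (lam : ℂ) / 2).re = lam / 2 := by
      simp [Complex.add_re, hre n]
    rw [h] at h1
    simp at h1
    linarith
  have hrne : ∀ n, r n ≠ 0 := fun n => by rw [hr n]; exact inv_ne_zero (hne n)
  have hrinj : Function.Injective r := by
    intro n m h
    rw [hr n, hr m, inv_inj] at h
    exact hinj (add_right_cancel h)
  have hrtend : Filter.Tendsto (fun n => ‖r n‖) Filter.atTop (nhds 0) := by
    have h1 : Filter.Tendsto (fun n => ‖μ n + (lam : ℂ) / 2‖)
        Filter.atTop Filter.atTop := by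
      apply Filter.tendsto_atTop_mono (fun n => ?_)
        (Filter.tendsto_atTop_add_const_right _ (-(lam / 2)) htend)
      have h3 := norm_add_le (μ n + (lam : ℂ) / 2) (-((lam : ℂ) / 2))
      simp only [add_neg_cancel_right, norm_neg] at h3
      have h2 : ‖(lam : ℂ) / 2‖ = lam / 2 := by
        rw [norm_div, Complex.norm_real, Real.norm_eq_abs, abs_of_pos hlam]
        norm_num
      rw [h2] at h3
      linarith
    have h2 := h1.inv_tendsto_atTop
    refine h2.congr fun n => ?_
    rw [hr n, norm_inv]
    rfl
  -- the absolutely summable sequence a n = d n * r n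
  set a : ℕ → ℂ := fun n => d n * r n with ha_def
  have hsumm : ∀ m : ℕ, HasSum (fun n => a n * r n ^ m) 0 := by
    intro m
    exact (hsum (m + 1) (by omega)).congr_fun fun n => by
      simp only [ha_def, pow_succ]; ring
  have hS : ∀ m, Summable (fun n => a n * r n ^ m) := fun m => (hsumm m).summable
  have hT : ∀ m, ∑' n, a n * r n ^ m = 0 := fun m => (hsumm m).tsum_eq
  have hanorm : Summable (fun n => ‖a n‖) := by
    have h0 := (hS 0).norm
    refine h0.congr fun n => ?_
    simp
  -- main argument
  intro k
  by_contra hdk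
  have hak : a k ≠ 0 := mul_ne_zero hdk (hrne k)
  have hkpos : 0 < ‖r k‖ := by
    simpa [norm_pos_iff] using hrne k
  -- eventually |r n| < |r k|
  obtain ⟨N, hN⟩ : ∃ N, ∀ n, N ≤ n → ‖r n‖ < ‖r k‖ := by
    have := hrtend.eventually (gt_mem_nhds hkpos)
    exact Filter.eventually_atTop.mp this
  -- finite set of candidate maximizers
  set F : Finset ℕ := (Finset.range (N + 1)).filter
      (fun n => a n ≠ 0 ∧ ‖r k‖ ≤ ‖r n‖) with hF_def
  have hkF : k ∈ F := by
    have hkN : k < N + 1 := by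
      by_contra h
      exact absurd (hN k (by omega)) (lt_irrefl _)
    simp [hF_def, Finset.mem_filter, Finset.mem_range, hkN, hak]
  obtain ⟨K, hKF, hKmax⟩ := F.exists_max_image (fun n => ‖r n‖) ⟨k, hkF⟩
  obtain ⟨hKrange, haK, hkK⟩ : K < N + 1 ∧ a K ≠ 0 ∧
      ‖r k‖ ≤ ‖r K‖ := by
    simpa [hF_def, Finset.mem_filter, Finset.mem_range] using hKF
  have hmax : ∀ j, a j ≠ 0 → ‖r j‖ ≤ ‖r K‖ := by
    intro j haj
    rcases lt_or_ge (‖r j‖) (‖r k‖) with h | h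
    · exact le_trans h.le hkK
    · have hjN : j < N + 1 := by
        by_contra hc
        exact absurd h (not_le.mpr (hN j (by omega)))
      exact hKmax j (by simp [hF_def, Finset.mem_filter, Finset.mem_range, hjN, haj, h])
  set ρ : ℝ := ‖r K‖ with hρ_def
  have hρ : 0 < ρ := lt_of_lt_of_le hkpos hkK
  set c : ℂ := (starRingEnd ℂ) (r K) / ((ρ : ℂ) ^ 2) with hc_def
  set w : ℕ → ℂ := fun n => r n * c with hw_def
  have hρsq : ((ρ : ℂ) ^ 2) ≠ 0 :=
    pow_ne_zero 2 (Complex.ofReal_ne_zero.mpr hρ.ne')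
  have hrKconj : r K * (starRingEnd ℂ) (r K) = (ρ : ℂ) ^ 2 := by
    rw [Complex.mul_conj]
    norm_cast
    rw [hρ_def, Complex.sq_norm]
  have hc2 : c * ((ρ : ℂ) ^ 2) = (starRingEnd ℂ) (r K) := div_mul_cancel₀ _ hρsq
  have hwK : w K = 1 := by
    show r K * ((starRingEnd ℂ) (r K) / ((ρ : ℂ) ^ 2)) = 1
    rw [mul_div_assoc', hrKconj, div_self hρsq]
  have hwabs : ∀ n, ‖w n‖ = ‖r n‖ / ρ := by
    intro n
    show ‖r n * ((starRingEnd ℂ) (r K) / ((ρ : ℂ) ^ 2))‖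
        = ‖r n‖ / ρ
    rw [norm_mul, norm_div, Complex.norm_conj, norm_pow, Complex.norm_real, Real.norm_eq_abs,
      abs_of_pos hρ, ← hρ_def]
    field_simp
  have hwne1 : ∀ n, n ≠ K → w n ≠ 1 := by
    intro n hn h1
    apply hn
    apply hrinj
    have h1' : r n * c = 1 := h1
    have h2 : r n * (starRingEnd ℂ) (r K) = (ρ : ℂ) ^ 2 := by
      rw [← hc2, ← mul_assoc, h1', one_mul]
    have hconjne : (starRingEnd ℂ) (r K) ≠ 0 := by
      simp [hrne K]
    exact mul_right_cancel₀ hconjne (h2.trans hrKconj.symm)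
  -- the Cesàro averages
  set g : ℕ → ℕ → ℂ := fun M n => a n * (((M : ℂ))⁻¹ * ∑ m ∈ Finset.range M, w n ^ m)
    with hg_def
  -- Step A : each average sums to 0
  have hgsum : ∀ M, ∑' n, g M n = 0 := by
    intro M
    have h1 : ∀ n, g M n = ∑ m ∈ Finset.range M, (M : ℂ)⁻¹ * c ^ m * (a n * r n ^ m) := by
      intro n
      show a n * ((M : ℂ)⁻¹ * ∑ m ∈ Finset.range M, (r n * c) ^ m) = _
      rw [Finset.mul_sum, Finset.mul_sum]
      refine Finset.sum_congr rfl fun m _ => ?_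
      rw [mul_pow]
      ring
    calc ∑' n, g M n
        = ∑' n, ∑ m ∈ Finset.range M, (M : ℂ)⁻¹ * c ^ m * (a n * r n ^ m) :=
          tsum_congr h1
      _ = ∑ m ∈ Finset.range M, ∑' n, (M : ℂ)⁻¹ * c ^ m * (a n * r n ^ m) :=
          Summable.tsum_finsetSum (fun m _ => (hS m).mul_left _)
      _ = 0 := by
          refine Finset.sum_eq_zero fun m _ => ?_
          rw [tsum_mul_left, hT m, mul_zero]
  -- Step B : pointwise limits
  have hlim : ∀ n, Filter.Tendsto (fun M => g M n) Filter.atTop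
      (nhds (if n = K then a n else 0)) := by
    intro n
    by_cases hn : n = K
    · subst hn
      simp only [if_pos rfl]
      have hev : ∀ M : ℕ, 1 ≤ M → g M n = a n := by
        intro M hM
        show a n * ((M : ℂ)⁻¹ * ∑ m ∈ Finset.range M, w n ^ m) = a n
        rw [hwK]
        simp only [one_pow, Finset.sum_const, Finset.card_range, nsmul_eq_mul, mul_one]
        rw [inv_mul_cancel₀ (Nat.cast_ne_zero.mpr (by omega)), mul_one]
      exact Filter.Tendsto.congr'
        (Filter.eventually_atTop.mpr ⟨1, fun M hM => (hev M hM).symm⟩) tendsto_const_nhds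
    · by_cases haz : a n = 0
      · have hz : ∀ M, g M n = 0 := fun M => by
          show a n * _ = 0
          rw [haz, zero_mul]
        simp only [if_neg hn]
        rw [show (fun M => g M n) = (fun _ => (0 : ℂ)) from funext hz]
        exact tendsto_const_nhds
      · simp only [if_neg hn]
        have hw1 : w n ≠ 1 := hwne1 n hn
        have hwle : ‖w n‖ ≤ 1 := by
          rw [hwabs n]
          exact div_le_one_of_le₀ (hmax n haz) hρ.le
        have hwne0 : ‖w n - 1‖ ≠ 0 := by
          simpa [sub_eq_zero] using hw1
        have hwpos : 0 < ‖w n - 1‖ := lt_of_le_of_ne (norm_nonneg _) (Ne.symm hwne0)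
        refine squeeze_zero_norm (a := fun M : ℕ => (‖a n‖ * (2 / ‖w n - 1‖)) / (M : ℝ))
          (fun M => ?_) (tendsto_const_div_atTop_nhds_zero_nat _)
        rcases Nat.eq_zero_or_pos M with hM | hM
        · subst hM
          have hg0 : g 0 n = 0 := by
            show a n * (((0 : ℕ) : ℂ)⁻¹ * ∑ m ∈ Finset.range 0, w n ^ m) = 0
            simp
          rw [hg0]
          simp
        · have hMpos : (0 : ℝ) < M := by exact_mod_cast hM
          have hwle' : ‖w n‖ ≤ 1 := hwle
          have key : ‖(M : ℂ)⁻¹ * ∑ m ∈ Finset.range M, w n ^ m‖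
              ≤ (M : ℝ)⁻¹ * (2 / ‖w n - 1‖) := by
            rw [geom_sum_eq hw1, norm_mul, norm_div, norm_inv, Complex.norm_natCast]
            gcongr
            calc ‖w n ^ M - 1‖ ≤ ‖w n ^ M‖ + ‖(1 : ℂ)‖ := norm_sub_le _ _
              _ ≤ 1 + 1 := add_le_add
                  (by rw [norm_pow]; exact pow_le_one₀ (norm_nonneg _) hwle')
                  (by simp)
              _ = 2 := by norm_num
          calc ‖g M n‖
              = ‖a n‖ * ‖(M : ℂ)⁻¹ * ∑ m ∈ Finset.range M, w n ^ m‖ :=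
                norm_mul (a n) _
            _ ≤ ‖a n‖ * ((M : ℝ)⁻¹ * (2 / ‖w n - 1‖)) :=
                mul_le_mul_of_nonneg_left key (norm_nonneg _)
            _ = (‖a n‖ * (2 / ‖w n - 1‖)) / M := by
                field_simp
  -- Step C : uniform domination
  have hdom : ∀ M, ∀ n, ‖g M n‖ ≤ ‖a n‖ := by
    intro M n
    by_cases haz : a n = 0
    · have : g M n = 0 := by
        show a n * _ = 0
        rw [haz, zero_mul]
      simp [this]
    · have hwle : ‖w n‖ ≤ 1 := by
        rw [hwabs n]
        exact div_le_one_of_le₀ (hmax n haz) hρ.le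
      have hbound : ‖∑ m ∈ Finset.range M, w n ^ m‖ ≤ M := by
        calc ‖∑ m ∈ Finset.range M, w n ^ m‖
            ≤ ∑ m ∈ Finset.range M, ‖w n ^ m‖ := norm_sum_le _ _
          _ ≤ ∑ _m ∈ Finset.range M, 1 := Finset.sum_le_sum fun m _ => by
              rw [norm_pow]
              exact pow_le_one₀ (norm_nonneg _) hwle
          _ = M := by simp
      have h2 : ‖(M : ℂ)⁻¹ * ∑ m ∈ Finset.range M, w n ^ m‖ ≤ 1 := by
        rcases Nat.eq_zero_or_pos M with hM | hM
        · subst hM; simp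
        · have hMpos : (0 : ℝ) < M := by exact_mod_cast hM
          rw [norm_mul, norm_inv, Complex.norm_natCast]
          calc (M : ℝ)⁻¹ * ‖∑ m ∈ Finset.range M, w n ^ m‖
              ≤ (M : ℝ)⁻¹ * M := by gcongr
            _ = 1 := inv_mul_cancel₀ hMpos.ne'
      calc ‖g M n‖ = ‖a n‖ * ‖(M : ℂ)⁻¹ * ∑ m ∈ Finset.range M, w n ^ m‖ := by
            show ‖a n * ((M : ℂ)⁻¹ * ∑ m ∈ Finset.range M, w n ^ m)‖ = _
            rw [norm_mul]
        _ ≤ ‖a n‖ * 1 := by gcongr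
        _ = ‖a n‖ := mul_one _
  -- Conclusion by dominated convergence
  have hdc := tendsto_tsum_of_dominated_convergence hanorm hlim
    (Filter.Eventually.of_forall hdom)
  have hts : ∑' n, (if n = K then a n else 0) = a K := by
    have he : (fun n => if n = K then a n else 0) = fun n => if n = K then a K else 0 := by
      funext n
      by_cases h : n = K
      · rw [if_pos h, if_pos h, h]
      · rw [if_neg h, if_neg h]
    rw [he]
    exact tsum_ite_eq K (fun _ => a K)
  rw [hts] at hdc
  have h0 : Filter.Tendsto (fun M => ∑' n, g M n) Filter.atTop (nhds 0) := by
    rw [show (fun M => ∑' n, g M n) = fun _ => (0 : ℂ) from funext hgsum]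
    exact tendsto_const_nhds
  exact haK (tendsto_nhds_unique hdc h0)
end

section
/- In a Hilbert space H, let (φ_n)_{n ∈ ℕ*} be an orthonormal basis, let (ξ_n)_{n ∈ ℕ*} be a family such that ∑_n ‖ξ_n − φ_n‖² < ∞ (quadratically close). If (ξ_n) is ω-independent (no nontrivial ℓ² combination vanishes), then (ξ_n) is a Riesz basis of H. -/
open Real in
/-- Cauchy–Schwarz for series. -/
lemma cs_tsum {f g : ℕ → ℝ} (hf : ∀ n, 0 ≤ f n) (hg : ∀ n, 0 ≤ g n)
    (hf2 : Summable (fun n => f n ^ 2)) (hg2 : Summable (fun n => g n ^ 2)) :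
    (Summable fun n => f n * g n) ∧
      ∑' n, f n * g n ≤ Real.sqrt (∑' n, f n ^ 2) * Real.sqrt (∑' n, g n ^ 2) := by
  have hpq : Real.HolderConjugate 2 2 := ⟨by norm_num, by norm_num, by norm_num⟩
  have h2 : ∀ (h : ℕ → ℝ), (fun n => h n ^ (2:ℝ)) = fun n => h n ^ 2 := by
    intro h; funext n; rw [show (2:ℝ) = ((2:ℕ):ℝ) by norm_num, Real.rpow_natCast]
  have := summable_and_inner_le_Lp_mul_Lq_tsum_of_nonneg hpq hf hg (by rw [h2]; exact hf2) (by rw [h2]; exact hg2)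
  rw [h2, h2] at this
  refine ⟨this.1, this.2.trans_eq ?_⟩
  rw [Real.sqrt_eq_rpow, Real.sqrt_eq_rpow]

set_option maxHeartbeats 2000000 in
/-- A family quadratically close to an orthonormal basis and ω-independent is a Riesz basis. -/
theorem stmt11 {H : Type*} [NormedAddCommGroup H] [InnerProductSpace ℂ H] [CompleteSpace H]
    (φ : HilbertBasis ℕ ℂ H) (ξ : ℕ → H)
    (hclose : Summable (fun n => ‖ξ n - φ n‖ ^ 2))
    (hindep : ∀ c : ℕ → ℂ, Summable (fun n => ‖c n‖ ^ 2) →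
      HasSum (fun n => c n • ξ n) 0 → ∀ n, c n = 0) :
    ∃ T : H ≃L[ℂ] H, ∀ n, T (φ n) = ξ n := by
  set δ : ℕ → H := fun n => ξ n - φ n with hδ
  have h2r : ∀ (h : ℕ → ℝ), (fun n => h n ^ ((2 : ENNReal).toReal)) = fun n => h n ^ 2 := by
    intro h; funext n
    rw [show ((2 : ENNReal).toReal) = ((2:ℕ):ℝ) by norm_num, Real.rpow_natCast]
  -- coefficients are square-summable with sum ‖x‖²
  have hcsq : ∀ x : H, Summable (fun n => ‖φ.repr x n‖ ^ 2) := by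
    intro x
    have h := (memℓp_gen_iff (p := 2) (by norm_num)).1 (lp.memℓp (φ.repr x))
    rwa [h2r] at h
  have hcnorm : ∀ x : H, ∑' n, ‖φ.repr x n‖ ^ 2 = ‖x‖ ^ 2 := by
    intro x
    have h := lp.norm_rpow_eq_tsum (p := 2) (by norm_num) (φ.repr x)
    rw [h2r] at h
    rw [← h, φ.repr.norm_map x]
    norm_num
  -- the series defining K is absolutely summable
  have habs : ∀ x : H, Summable (fun n => ‖(φ.repr x n : ℂ) • δ n‖) := by
    intro x
    have := (cs_tsum (f := fun n => ‖φ.repr x n‖) (g := fun n => ‖δ n‖)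
      (fun n => norm_nonneg _) (fun n => norm_nonneg _) (hcsq x) hclose).1
    simpa [norm_smul] using this
  have hsumm : ∀ x : H, Summable (fun n => (φ.repr x n : ℂ) • δ n) :=
    fun x => (habs x).of_norm
  -- the perturbation operator K
  set D : ℝ := Real.sqrt (∑' n, ‖δ n‖ ^ 2) with hD
  have hbound : ∀ x : H, ‖∑' n, (φ.repr x n : ℂ) • δ n‖ ≤ D * ‖x‖ := by
    intro x
    refine (norm_tsum_le_tsum_norm (habs x)).trans ?_
    have h := (cs_tsum (f := fun n => ‖φ.repr x n‖) (g := fun n => ‖δ n‖)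
      (fun n => norm_nonneg _) (fun n => norm_nonneg _) (hcsq x) hclose).2
    calc ∑' n, ‖(φ.repr x n : ℂ) • δ n‖ = ∑' n, ‖φ.repr x n‖ * ‖δ n‖ := by
          simp [norm_smul]
      _ ≤ Real.sqrt (∑' n, ‖φ.repr x n‖ ^ 2) * Real.sqrt (∑' n, ‖δ n‖ ^ 2) := h
      _ = D * ‖x‖ := by
          rw [hcnorm x, Real.sqrt_sq (norm_nonneg x)]; ring
  set K₀ : H →ₗ[ℂ] H :=
    { toFun := fun x => ∑' n, (φ.repr x n : ℂ) • δ n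
      map_add' := by
        intro x y
        dsimp only
        rw [← Summable.tsum_add (hsumm x) (hsumm y)]
        congr 1; funext n
        rw [map_add]
        simp [add_smul]
      map_smul' := by
        intro c x
        dsimp only [RingHom.id_apply]
        rw [← Summable.tsum_const_smul c (hsumm x)]
        congr 1; funext n
        rw [map_smul]
        simp [smul_smul] } with hK₀
  set K : H →L[ℂ] H := K₀.mkContinuous D hbound with hK
  have hKapply : ∀ x : H, K x = ∑' n, (φ.repr x n : ℂ) • δ n := fun x => rfl
  set T₀ : H →L[ℂ] H := 1 + K with hT₀
  -- T₀ sends φ n to ξ n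
  have hT₀φ : ∀ n, T₀ (φ n) = ξ n := by
    intro n
    have h1 : K (φ n) = δ n := by
      rw [hKapply]
      rw [show ∑' m, (φ.repr (φ n) m : ℂ) • δ m = (φ.repr (φ n) n : ℂ) • δ n from
        tsum_eq_single n ?_]
      · rw [φ.repr_self, lp.single_apply_self, one_smul]
      · intro m hm
        rw [φ.repr_self, lp.single_apply_ne 2 n _ hm, zero_smul]
    show φ n + K (φ n) = ξ n
    rw [h1]; simp [hδ]
  -- the expansion of T₀ x
  have hT₀sum : ∀ x : H, HasSum (fun n => (φ.repr x n : ℂ) • ξ n) (T₀ x) := by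
    intro x
    have h1 : HasSum (fun n => (φ.repr x n : ℂ) • φ n) x := φ.hasSum_repr x
    have h2 : HasSum (fun n => (φ.repr x n : ℂ) • δ n) (K x) := (hsumm x).hasSum
    have hfun : (fun n => (φ.repr x n : ℂ) • ξ n)
        = fun n => (φ.repr x n : ℂ) • φ n + (φ.repr x n : ℂ) • δ n := by
      funext n; rw [← smul_add]; congr 1; simp [hδ]
    have hTx : T₀ x = x + K x := by
      simp [hT₀, ContinuousLinearMap.add_apply]
    rw [hfun, hTx]
    exact h1.add h2
  -- T₀ is injective
  have hinj : Function.Injective T₀ := by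
    have hker : ∀ x : H, T₀ x = 0 → x = 0 := by
      intro x hx
      have hc := hindep (fun n => φ.repr x n) (hcsq x) (hx ▸ hT₀sum x)
      have : φ.repr x = 0 := by
        ext n
        exact hc n
      simpa using congrArg φ.repr.symm this
    intro x y hxy
    have h0 : T₀ (x - y) = 0 := by rw [map_sub, hxy, sub_self]
    exact sub_eq_zero.1 (hker _ h0)
  -- choose N with small tail
  obtain ⟨N, hN⟩ : ∃ N : ℕ, ∑' n, ‖δ (n + N)‖ ^ 2 < 1 := by
    have ht := tendsto_sum_nat_add (f := fun n => ‖δ n‖ ^ 2)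
    have := ht.eventually (gt_mem_nhds (by norm_num : (0:ℝ) < 1))
    exact this.exists
  -- the finite-rank part
  set KN : H →L[ℂ] H :=
    ∑ n ∈ Finset.range N, (innerSL ℂ (φ n)).smulRight (δ n) with hKNdef
  have hKN : ∀ x : H, KN x = ∑ n ∈ Finset.range N, (φ.repr x n : ℂ) • δ n := by
    intro x
    simp [hKNdef, ContinuousLinearMap.sum_apply, ContinuousLinearMap.smulRight_apply,
      ← φ.repr_apply_apply]
  -- the small part
  set R : H →L[ℂ] H := K - KN with hRdef
  have hR : ∀ x : H, R x = ∑' n, (φ.repr x (n + N) : ℂ) • δ (n + N) := by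
    intro x
    have h := Summable.sum_add_tsum_nat_add (f := fun n => (φ.repr x n : ℂ) • δ n) N (hsumm x)
    have : R x = K x - KN x := rfl
    rw [this, hKapply, hKN, ← h]
    abel
  set ε : ℝ := Real.sqrt (∑' n, ‖δ (n + N)‖ ^ 2) with hε
  have hδtail : Summable (fun n => ‖δ (n + N)‖ ^ 2) := (summable_nat_add_iff N).2 hclose
  have hRnorm : ∀ x : H, ‖R x‖ ≤ ε * ‖x‖ := by
    intro x
    have hctail : Summable (fun n => ‖φ.repr x (n + N)‖ ^ 2) :=
      (summable_nat_add_iff N).2 (hcsq x)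
    have habs' : Summable (fun n => ‖(φ.repr x (n + N) : ℂ) • δ (n + N)‖) :=
      (summable_nat_add_iff N).2 (habs x)
    have hcs := cs_tsum (f := fun n => ‖φ.repr x (n + N)‖) (g := fun n => ‖δ (n + N)‖)
      (fun n => norm_nonneg _) (fun n => norm_nonneg _) hctail hδtail
    have htail_le : ∑' n, ‖φ.repr x (n + N)‖ ^ 2 ≤ ∑' n, ‖φ.repr x n‖ ^ 2 := by
      refine Summable.tsum_le_tsum_of_inj (fun n => n + N) (add_left_injective N)
        (fun c _ => sq_nonneg _) (fun n => le_rfl) hctail (hcsq x)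
    rw [hR]
    refine (norm_tsum_le_tsum_norm habs').trans ?_
    calc ∑' n, ‖(φ.repr x (n + N) : ℂ) • δ (n + N)‖
        = ∑' n, ‖φ.repr x (n + N)‖ * ‖δ (n + N)‖ := by simp [norm_smul]
      _ ≤ Real.sqrt (∑' n, ‖φ.repr x (n + N)‖ ^ 2) * Real.sqrt (∑' n, ‖δ (n + N)‖ ^ 2) := hcs.2
      _ ≤ Real.sqrt (∑' n, ‖φ.repr x n‖ ^ 2) * ε := by
          refine mul_le_mul_of_nonneg_right (Real.sqrt_le_sqrt htail_le) (Real.sqrt_nonneg _)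
      _ = ε * ‖x‖ := by rw [hcnorm x, Real.sqrt_sq (norm_nonneg x)]; ring
  have hε1 : ε < 1 := by
    rw [hε, show (1:ℝ) = Real.sqrt 1 by simp]
    exact Real.sqrt_lt_sqrt (tsum_nonneg fun n => sq_nonneg _) hN
  have hRop : ‖-R‖ < 1 := by
    rw [norm_neg]
    refine lt_of_le_of_lt (ContinuousLinearMap.opNorm_le_bound R
      (Real.sqrt_nonneg _) hRnorm) hε1
  -- invert 1 + R
  set U : (H →L[ℂ] H)ˣ := Units.oneSub (-R) hRop with hU
  have hUval : (U : H →L[ℂ] H) = 1 + R := by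
    rw [hU]
    show (1 : H →L[ℂ] H) - (-R) = 1 + R
    rw [sub_neg_eq_add]
  set F : H →L[ℂ] H := (↑U⁻¹ : H →L[ℂ] H) * KN with hF
  set S : H →L[ℂ] H := 1 + F with hS
  have hTS : T₀ = (U : H →L[ℂ] H) * S := by
    rw [hS, hF, mul_add, mul_one, ← mul_assoc, Units.mul_inv, one_mul, hUval, hT₀, hRdef]
    abel
  have hSapply : ∀ x : H, S x = x + F x := by
    intro x; rw [hS]; simp [ContinuousLinearMap.add_apply]
  have hSinj : Function.Injective S := by
    intro a b hab
    apply hinj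
    rw [hTS, ContinuousLinearMap.mul_apply, ContinuousLinearMap.mul_apply, hab]
  -- finite-dimensional subspace containing the range of F
  set W : Submodule ℂ H :=
    Submodule.span ℂ ((↑U⁻¹ : H →L[ℂ] H) '' (δ '' Set.Iio N)) with hW
  haveI hWfin : FiniteDimensional ℂ W :=
    FiniteDimensional.span_of_finite ℂ (((Set.finite_Iio N).image δ).image _)
  have hFW : ∀ x : H, F x ∈ W := by
    intro x
    have h1 : KN x ∈ Submodule.span ℂ (δ '' Set.Iio N) := by
      rw [hKN]
      refine Submodule.sum_mem _ fun n hn => Submodule.smul_mem _ _ ?_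
      exact Submodule.subset_span ⟨n, Finset.mem_range.1 hn, rfl⟩
    have h2 : F x = (↑U⁻¹ : H →L[ℂ] H) (KN x) := rfl
    rw [h2, hW]
    exact Submodule.apply_mem_span_image_of_mem_span ((↑U⁻¹ : H →L[ℂ] H) : H →ₗ[ℂ] H) h1
  -- restriction of S to W
  set S' : W →ₗ[ℂ] W := (S : H →ₗ[ℂ] H).restrict
    (fun x hx => by
      have : S x = x + F x := hSapply x
      rw [ContinuousLinearMap.coe_coe, this]
      exact W.add_mem hx (hFW x)) with hS'
  have hS'inj : Function.Injective S' := by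
    intro a b hab
    have : S (a : H) = S (b : H) := congrArg Subtype.val hab
    exact Subtype.ext (hSinj this)
  have hS'surj : Function.Surjective S' :=
    LinearMap.injective_iff_surjective.1 hS'inj
  have hSsurj : Function.Surjective S := by
    intro y
    obtain ⟨w, hw⟩ := hS'surj ⟨F y, hFW y⟩
    have hw' : S (w : H) = F y := congrArg Subtype.val hw
    refine ⟨y - (w : H), ?_⟩
    rw [map_sub, hw', hSapply y]
    abel
  have hsurj : Function.Surjective T₀ := by
    intro y
    obtain ⟨x, hx⟩ := hSsurj ((↑U⁻¹ : H →L[ℂ] H) y)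
    refine ⟨x, ?_⟩
    rw [hTS, ContinuousLinearMap.mul_apply, hx, ← ContinuousLinearMap.mul_apply,
      Units.mul_inv, ContinuousLinearMap.one_apply]
  refine ⟨ContinuousLinearEquiv.ofBijective T₀
    (LinearMap.ker_eq_bot.2 hinj) (LinearMap.range_eq_top.2 hsurj), fun n => ?_⟩
  rw [show ⇑(ContinuousLinearEquiv.ofBijective T₀ _ _) = ⇑T₀ from
    ContinuousLinearEquiv.coeFn_ofBijective T₀ _ _]
  exact hT₀φ n
end

section
/- Let α > 1 and let h : [1, ∞) → ℝ satisfy c·s^α ≤ |h(s)| ≤ C·s^α for all s ≥ 1 and |h(n₁) − h(n₂)| ≥ c'·|n₁ − n₂|·n₁^{α−1} for all positive integers n₁, n₂. Then for every real s < α − 1 there exists C'' > 0 such that for all integers p ≥ 2, ∑_{n ∈ ℕ*, n ≠ p} n^s/|h(n) − h(p)| ≤ C''·(p^{1−α+s}·log(p) + p^{−α}). -/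
open Finset Real

-- core Bernoulli-type telescoping inequality
lemma aux_bern (σ : ℝ) (hσ : σ < 0) (b : ℝ) (hb : 2 ≤ b) :
    b ^ (σ - 1) ≤ ((b - 1) ^ σ - b ^ σ) / (-σ) := by
  set q : ℝ := -σ with hqdef
  have hq : 0 < q := by simp [hqdef]; linarith
  have hb0 : (0:ℝ) < b := by linarith
  have hb1 : (0:ℝ) < b - 1 := by linarith
  have hfrac : (0:ℝ) < (b-1)/b := by positivity
  have key : 1 + q / b ≤ ((b - 1) / b) ^ σ := by
    rcases le_or_gt 1 q with hq1 | hq1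
    · have B : 1 + q * (1/(b-1)) ≤ (1 + 1/(b-1)) ^ q :=
        one_add_mul_self_le_rpow_one_add (by
          have : (0:ℝ) ≤ 1/(b-1) := by positivity
          linarith) hq1
      have h1 : (1:ℝ) + 1/(b-1) = ((b-1)/b)⁻¹ := by field_simp; ring
      have e : ((b-1)/b) ^ σ = (1 + 1/(b-1)) ^ q := by
        rw [h1, Real.inv_rpow hfrac.le, ← Real.rpow_neg hfrac.le]
        congr 1
        simp [hqdef]
      rw [e]
      refine le_trans ?_ B
      have : q / b ≤ q * (1/(b-1)) := by
        rw [mul_one_div]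
        gcongr
        linarith
      linarith
    · have hnb : (-1:ℝ) ≤ -(1/b) := by
        have : 1/b ≤ 1 := by rw [div_le_one hb0]; linarith
        linarith
      have B : (1 + -(1/b)) ^ q ≤ 1 + q * (-(1/b)) :=
        rpow_one_add_le_one_add_mul_self hnb hq.le hq1.le
      have h1 : (b-1)/b = 1 + -(1/b) := by field_simp; ring
      have posq : 0 < 1 + -(1/b) := by
        have : 1/b ≤ 1/2 := by
          rw [div_le_div_iff₀ hb0 (by norm_num)]; linarith
        linarith
      have pos2 : 0 < (1 + -(1/b)) ^ q := rpow_pos_of_pos posq q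
      have posr : 0 < 1 + q * (-(1/b)) := by
        have h2 : q * (1/b) ≤ 1 * (1/b) := by gcongr
        have h3 : 1/b ≤ 1/2 := by rw [div_le_div_iff₀ hb0 (by norm_num)]; linarith
        nlinarith
      have e : ((b-1)/b) ^ σ = ((1 + -(1/b)) ^ q)⁻¹ := by
        rw [h1, ← Real.rpow_neg posq.le]
        congr 1
        simp [hqdef]
      rw [e]
      have step1 : (1 + q/b) * ((1 + -(1/b)) ^ q) ≤ (1 + q/b) * (1 + q * (-(1/b))) := by
        have : (0:ℝ) ≤ 1 + q/b := by positivity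
        exact mul_le_mul_of_nonneg_left B this
      have step2 : (1 + q/b) * (1 + q * (-(1/b))) ≤ 1 := by
        have hqb : q/b = q * (1/b) := by ring
        nlinarith [sq_nonneg (q * (1/b)), mul_pos hq hb0]
      rw [← one_div, le_div_iff₀ pos2]
      linarith
  -- multiply through
  have hdr : ((b-1)/b) ^ σ = (b-1)^σ / b^σ := Real.div_rpow hb1.le hb0.le σ
  have hbσ : (0:ℝ) < b ^ σ := rpow_pos_of_pos hb0 σ
  have key2 : b ^ σ * (1 + q / b) ≤ (b-1)^σ := by
    calc b ^ σ * (1 + q / b) ≤ b ^ σ * ((b-1)^σ / b^σ) := by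
          rw [← hdr]; exact mul_le_mul_of_nonneg_left key hbσ.le
      _ = (b-1)^σ := by field_simp
  have hsub : b ^ (σ - 1) = b ^ σ / b := Real.rpow_sub_one hb0.ne' σ
  rw [hsub, le_div_iff₀ hq]
  have expand : b ^ σ * (1 + q / b) = b ^ σ + (b ^ σ / b) * q := by field_simp
  rw [expand] at key2
  linarith

-- telescoped tail sum
lemma aux_tail (σ : ℝ) (hσ : σ < 0) (m : ℕ) (hm : 1 ≤ m) :
    ∀ k : ℕ, ∑ n ∈ Finset.Ioc m (m + k), ((n:ℝ)) ^ (σ - 1)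
      ≤ ((m:ℝ) ^ σ - ((m + k : ℕ) : ℝ) ^ σ) / (-σ) := by
  intro k
  induction k with
  | zero => simp
  | succ k ih =>
    have h1 : m ≤ m + k := Nat.le_add_right m k
    rw [show m + (k+1) = (m + k) + 1 by ring, Finset.sum_Ioc_succ_top (by omega)]
    have hb : (2:ℝ) ≤ ((m + k : ℕ) : ℝ) + 1 := by
      have : (1:ℝ) ≤ ((m + k : ℕ) : ℝ) := by exact_mod_cast Nat.one_le_iff_ne_zero.mpr (by omega)
      linarith
    have hberr := aux_bern σ hσ (((m + k : ℕ) : ℝ) + 1) hb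
    have hcast : ((m + k + 1 : ℕ) : ℝ) = ((m + k : ℕ) : ℝ) + 1 := by push_cast; ring
    rw [hcast]
    have hsimp : ((m + k : ℕ) : ℝ) + 1 - 1 = ((m + k : ℕ) : ℝ) := by ring
    rw [hsimp] at hberr
    have := add_le_add ih hberr
    calc ∑ n ∈ Finset.Ioc m (m+k), ((n:ℝ))^(σ-1) + (((m+k:ℕ):ℝ)+1)^(σ-1)
        ≤ ((m:ℝ)^σ - ((m+k:ℕ):ℝ)^σ)/(-σ) + (((m+k:ℕ):ℝ)^σ - (((m+k:ℕ):ℝ)+1)^σ)/(-σ) := this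
      _ = ((m:ℝ)^σ - (((m+k:ℕ):ℝ)+1)^σ)/(-σ) := by ring

-- harmonic bound
lemma aux_harm : ∀ m : ℕ, ∑ k ∈ Finset.Icc 1 m, (1/(k:ℝ)) ≤ 1 + Real.log m := by
  intro m
  induction m with
  | zero => simp
  | succ m ih =>
    rcases Nat.eq_zero_or_pos m with rfl | hm
    · norm_num
    · rw [Finset.sum_Icc_succ_top (by omega)]
      have hlog : Real.log m + 1/((m:ℝ)+1) ≤ Real.log (m+1) := by
        have hm0 : (0:ℝ) < m := by exact_mod_cast hm
        have hm1 : (0:ℝ) < (m:ℝ) + 1 := by linarith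
        have h := Real.log_le_sub_one_of_pos (show (0:ℝ) < (m:ℝ)/((m:ℝ)+1) by positivity)
        rw [Real.log_div hm0.ne' hm1.ne'] at h
        have : (m:ℝ)/((m:ℝ)+1) - 1 = -(1/((m:ℝ)+1)) := by field_simp; ring
        rw [this] at h
        linarith
      push_cast
      push_cast at ih
      linarith

-- tail over a range-filter
lemma aux_tail_range (σ : ℝ) (hσ : σ < 0) (m : ℕ) (hm : 1 ≤ m) (N : ℕ) :
    ∑ n ∈ (Finset.range N).filter (fun n => m < n), ((n:ℝ)) ^ (σ - 1)
      ≤ (m:ℝ) ^ σ / (-σ) := by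
  have hsub : (Finset.range N).filter (fun n => m < n) ⊆ Finset.Ioc m (m + N) := by
    intro x hx
    simp only [Finset.mem_filter, Finset.mem_range] at hx
    simp only [Finset.mem_Ioc]
    omega
  calc ∑ n ∈ (Finset.range N).filter (fun n => m < n), ((n:ℝ)) ^ (σ - 1)
      ≤ ∑ n ∈ Finset.Ioc m (m + N), ((n:ℝ)) ^ (σ - 1) := by
        apply Finset.sum_le_sum_of_subset_of_nonneg hsub
        intro i _ _
        positivity
    _ ≤ ((m:ℝ) ^ σ - ((m + N : ℕ) : ℝ) ^ σ) / (-σ) := aux_tail σ hσ m hm N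
    _ ≤ (m:ℝ) ^ σ / (-σ) := by
        have h1 : (0:ℝ) ≤ ((m + N : ℕ) : ℝ) ^ σ := Real.rpow_nonneg (by positivity) σ
        have h2 : (0:ℝ) < -σ := by linarith
        gcongr
        linarith

-- sum of n^s over Icc 1 m
lemma aux_small_sum (s : ℝ) : ∃ K₀ : ℝ, 0 < K₀ ∧ ∀ m : ℕ, 1 ≤ m →
    ∑ n ∈ Finset.Icc 1 m, ((n:ℝ)) ^ s ≤ K₀ * ((m:ℝ) ^ (s+1) * (1 + Real.log m) + 1) := by
  rcases le_or_gt (-1) s with hs1 | hs1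
  · refine ⟨1, one_pos, fun m hm => ?_⟩
    have hm0 : (0:ℝ) < m := by exact_mod_cast hm
    have hlm : 0 ≤ Real.log m := Real.log_nonneg (by exact_mod_cast hm)
    have step : ∀ n ∈ Finset.Icc 1 m, ((n:ℝ)) ^ s ≤ (m:ℝ) ^ (s+1) * (1/(n:ℝ)) := by
      intro n hn
      simp only [Finset.mem_Icc] at hn
      have hn0 : (0:ℝ) < n := by exact_mod_cast hn.1
      have hnm : (n:ℝ) ≤ m := by exact_mod_cast hn.2
      have e : ((n:ℝ)) ^ s = (n:ℝ) ^ (s+1) / n := by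
        rw [← Real.rpow_sub_one hn0.ne' (s+1)]; norm_num
      rw [e]
      have h1 : (n:ℝ) ^ (s+1) ≤ (m:ℝ) ^ (s+1) :=
        Real.rpow_le_rpow hn0.le hnm (by linarith)
      rw [div_eq_mul_one_div]
      gcongr
    calc ∑ n ∈ Finset.Icc 1 m, ((n:ℝ)) ^ s
        ≤ ∑ n ∈ Finset.Icc 1 m, (m:ℝ) ^ (s+1) * (1/(n:ℝ)) := Finset.sum_le_sum step
      _ = (m:ℝ) ^ (s+1) * ∑ n ∈ Finset.Icc 1 m, (1/(n:ℝ)) := by rw [Finset.mul_sum]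
      _ ≤ (m:ℝ) ^ (s+1) * (1 + Real.log m) := by
          have := aux_harm m
          gcongr
      _ ≤ 1 * ((m:ℝ) ^ (s+1) * (1 + Real.log m) + 1) := by nlinarith
  · have hq : (0:ℝ) < -(s+1) := by linarith
    have hq' : (0:ℝ) < 1/(-(s+1)) := one_div_pos.mpr hq
    refine ⟨1 + 1/(-(s+1)), by linarith, fun m hm => ?_⟩
    have hm0 : (0:ℝ) < m := by exact_mod_cast hm
    have hsplit : ∑ n ∈ Finset.Ioc (0:ℕ) 1, ((n:ℝ)) ^ s + ∑ n ∈ Finset.Ioc 1 m, ((n:ℝ)) ^ s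
        = ∑ n ∈ Finset.Ioc (0:ℕ) m, ((n:ℝ)) ^ s :=
      Finset.sum_Ioc_consecutive (fun n : ℕ => ((n:ℝ)) ^ s) (by omega : (0:ℕ) ≤ 1) (by omega : 1 ≤ m)
    have hIcc : Finset.Icc 1 m = Finset.Ioc (0:ℕ) m := by
      ext x; simp [Finset.mem_Icc, Finset.mem_Ioc]; omega
    have h01 : ∑ n ∈ Finset.Ioc (0:ℕ) 1, ((n:ℝ)) ^ s = 1 := by
      rw [show Finset.Ioc (0:ℕ) 1 = {1} by rfl, Finset.sum_singleton]
      norm_num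
    have htail : ∑ n ∈ Finset.Ioc 1 m, ((n:ℝ)) ^ s ≤ 1/(-(s+1)) := by
      have := aux_tail (s+1) (by linarith) 1 le_rfl (m - 1)
      rw [show 1 + (m-1) = m by omega] at this
      have h2 : ∀ n, ((n:ℝ)) ^ ((s+1) - 1) = ((n:ℝ)) ^ s := by
        intro n; norm_num
      simp only [h2] at this
      push_cast at this
      refine this.trans ?_
      rw [Real.one_rpow]
      have h3 : (0:ℝ) ≤ ((m:ℕ):ℝ) ^ (s+1) := Real.rpow_nonneg hm0.le _
      rw [div_le_div_iff₀ (by linarith) (by linarith)]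
      nlinarith
    have hnn : (0:ℝ) ≤ (m:ℝ) ^ (s+1) * (1 + Real.log m) := by
      have : (0:ℝ) ≤ Real.log m := Real.log_nonneg (by exact_mod_cast hm)
      positivity
    rw [hIcc, ← hsplit, h01]
    nlinarith


set_option maxHeartbeats 1000000 in
/-- General sum estimate for Fourier multipliers h(|D_x|) of order α > 1:
for s < α − 1, ∑_{n ≠ p} n^s/|h(n) − h(p)| ≤ C''·(p^{1−α+s}·log p + p^{−α}). -/
theorem stmt16 (α : ℝ) (hα : 1 < α) (hfun : ℝ → ℝ)
    (c C c' : ℝ) (hc : 0 < c) (hC : 0 < C) (hc' : 0 < c')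
    (hgrow : ∀ s : ℝ, 1 ≤ s → c * s ^ α ≤ |hfun s| ∧ |hfun s| ≤ C * s ^ α)
    (hgap : ∀ n₁ n₂ : ℕ, 0 < n₁ → 0 < n₂ →
      c' * |(n₁ : ℝ) - (n₂ : ℝ)| * (n₁ : ℝ) ^ (α - 1) ≤ |hfun n₁ - hfun n₂|)
    (s : ℝ) (hs : s < α - 1) :
    ∃ C'' : ℝ, 0 < C'' ∧ ∀ p : ℕ, 2 ≤ p →
      (∑' n : ℕ, if n = 0 ∨ n = p then 0 else (n : ℝ) ^ s / |hfun n - hfun p|)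
        ≤ C'' * ((p : ℝ) ^ (1 - α + s) * Real.log p + (p : ℝ) ^ (-α)) := by
  obtain ⟨K₀, hK₀, hK₀b⟩ := aux_small_sum s
  have hσ : 1 - α + s < 0 := by linarith
  set σ : ℝ := 1 - α + s with hσdef
  set K₂ : ℝ := max 1 ((2:ℝ) ^ (-s)) with hK₂def
  have hK₂ : 0 < K₂ := lt_of_lt_of_le one_pos (le_max_left _ _)
  have hnσ : 0 < -σ := by linarith
  set K : ℝ := (2*K₀ + K₂ + 1 + 2/(-σ)) / c' with hKdef
  have hK : 0 < K := by
    apply div_pos _ hc'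
    have : 0 < 2/(-σ) := by positivity
    linarith
  have hlog2 : 0 < Real.log 2 := Real.log_pos one_lt_two
  refine ⟨K * (1 + 1/Real.log 2), by positivity, ?_⟩
  intro p hp
  have hp0 : 0 < p := by omega
  have hpR : (0:ℝ) < p := by exact_mod_cast hp0
  have hpR2 : (2:ℝ) ≤ p := by exact_mod_cast hp
  have hlogp : Real.log 2 ≤ Real.log p := Real.log_le_log (by norm_num) hpR2
  have hlogp0 : 0 < Real.log p := lt_of_lt_of_le hlog2 hlogp
  set L : ℝ := Real.log p with hLdef
  set T1 : ℕ → ℝ := fun n => if 1 ≤ n ∧ 2*n ≤ p then (2/c') * ((n:ℝ)^s * (p:ℝ)^(-α)) else 0 with hT1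
  set T2 : ℕ → ℝ := fun n => if p < 2*n ∧ n < p then (K₂/c') * ((p:ℝ)^σ * (1/((p - n : ℕ):ℝ))) else 0 with hT2
  set T3 : ℕ → ℝ := fun n => if p < n ∧ n ≤ 2*p then (1/c') * ((p:ℝ)^σ * (1/((n - p : ℕ):ℝ))) else 0 with hT3
  set T4 : ℕ → ℝ := fun n => if 2*p < n then (2/c') * ((n:ℝ)^(σ-1)) else 0 with hT4
  have hT1nn : ∀ n, 0 ≤ T1 n := fun n => by rw [hT1]; dsimp only; split <;> positivity
  have hT2nn : ∀ n, 0 ≤ T2 n := fun n => by rw [hT2]; dsimp only; split <;> positivity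
  have hT3nn : ∀ n, 0 ≤ T3 n := fun n => by rw [hT3]; dsimp only; split <;> positivity
  have hT4nn : ∀ n, 0 ≤ T4 n := fun n => by rw [hT4]; dsimp only; split <;> positivity
  -- pointwise bound
  have key : ∀ n : ℕ, (if n = 0 ∨ n = p then 0 else (n : ℝ) ^ s / |hfun n - hfun p|)
      ≤ T1 n + T2 n + T3 n + T4 n := by
    intro n
    by_cases h0 : n = 0 ∨ n = p
    · rw [if_pos h0]
      have := hT1nn n; have := hT2nn n; have := hT3nn n; have := hT4nn n
      linarith
    · rw [if_neg h0]
      push_neg at h0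
      obtain ⟨hn0, hnp⟩ := h0
      have hn1 : 1 ≤ n := Nat.one_le_iff_ne_zero.mpr hn0
      have hnpos : 0 < n := hn1
      have hnR : (1:ℝ) ≤ (n:ℝ) := by exact_mod_cast hn1
      have hnR0 : (0:ℝ) < n := by linarith
      have hd1 := hgap n p hnpos hp0
      have hd2 := hgap p n hp0 hnpos
      rw [abs_sub_comm (hfun p) (hfun n)] at hd2
      have hnum : (0:ℝ) ≤ (n:ℝ)^s := Real.rpow_nonneg hnR0.le s
      have hpα1 : (0:ℝ) < (p:ℝ)^(α-1) := Real.rpow_pos_of_pos hpR _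
      have hnα1 : (0:ℝ) < (n:ℝ)^(α-1) := Real.rpow_pos_of_pos hnR0 _
      rcases lt_or_gt_of_ne hnp with hlt | hgt
      · -- n < p : use hd2
        have hltR : (n:ℝ) < p := by exact_mod_cast hlt
        rw [abs_of_pos (by linarith : (0:ℝ) < (p:ℝ) - n)] at hd2
        have hden2 : (0:ℝ) < c' * ((p:ℝ) - n) * (p:ℝ)^(α-1) := by
          have h1 : (0:ℝ) < (p:ℝ) - n := by linarith
          positivity
        have hfb : (n:ℝ)^s / |hfun n - hfun p| ≤ (n:ℝ)^s / (c' * ((p:ℝ) - n) * (p:ℝ)^(α-1)) :=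
          div_le_div_of_nonneg_left hnum hden2 hd2
        rcases le_or_gt (2*n) p with hsp | hsp
        · -- T1 case
          have hT1v : T1 n = (2/c') * ((n:ℝ)^s * (p:ℝ)^(-α)) := by
            rw [hT1]; dsimp only; rw [if_pos ⟨hn1, hsp⟩]
          have h2nR : 2*(n:ℝ) ≤ p := by exact_mod_cast hsp
          have hden1 : (0:ℝ) < c' * ((p:ℝ)/2) * (p:ℝ)^(α-1) := by positivity
          have hstep1 : (n:ℝ)^s / (c' * ((p:ℝ) - n) * (p:ℝ)^(α-1))
              ≤ (n:ℝ)^s / (c' * ((p:ℝ)/2) * (p:ℝ)^(α-1)) := by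
            apply div_le_div_of_nonneg_left hnum hden1
            have h1 : (p:ℝ)/2 ≤ (p:ℝ) - n := by linarith
            exact mul_le_mul_of_nonneg_right (mul_le_mul_of_nonneg_left h1 hc'.le) hpα1.le
          have hpow : (p:ℝ)^α = (p:ℝ)^(α-1) * p := by
            rw [← Real.rpow_add_one hpR.ne' (α-1)]
            norm_num
          have hstep2 : (n:ℝ)^s / (c' * ((p:ℝ)/2) * (p:ℝ)^(α-1))
              = (2/c') * ((n:ℝ)^s * (p:ℝ)^(-α)) := by
            rw [Real.rpow_neg hpR.le, hpow]
            field_simp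
          have := (hfb.trans hstep1).trans_eq hstep2
          rw [hT1v]
          have := hT2nn n; have := hT3nn n; have := hT4nn n
          linarith
        · -- T2 case
          have hT2v : T2 n = (K₂/c') * ((p:ℝ)^σ * (1/((p - n : ℕ):ℝ))) := by
            rw [hT2]; dsimp only; rw [if_pos ⟨hsp, hlt⟩]
          have hcast : ((p - n : ℕ):ℝ) = (p:ℝ) - n := by
            push_cast [Nat.cast_sub hlt.le]
            ring
          have hK₂b : (n:ℝ)^s ≤ K₂ * (p:ℝ)^s := by
            have hps : (0:ℝ) ≤ (p:ℝ)^s := Real.rpow_nonneg hpR.le s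
            rcases le_or_gt 0 s with hs0 | hs0
            · have h1 : (n:ℝ)^s ≤ (p:ℝ)^s := Real.rpow_le_rpow hnR0.le hltR.le hs0
              have h2 : (1:ℝ) ≤ K₂ := le_max_left _ _
              calc (n:ℝ)^s ≤ (p:ℝ)^s := h1
                _ = 1 * (p:ℝ)^s := (one_mul _).symm
                _ ≤ K₂ * (p:ℝ)^s := mul_le_mul_of_nonneg_right h2 hps
            · have h2n : (p:ℝ)/2 < n := by
                have : (p:ℝ) < 2*n := by exact_mod_cast hsp
                linarith
              have h1 : (n:ℝ)^s ≤ ((p:ℝ)/2)^s :=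
                Real.rpow_le_rpow_of_nonpos (by positivity) h2n.le hs0.le
              have h2 : ((p:ℝ)/2)^s = (p:ℝ)^s * (2:ℝ)^(-s) := by
                rw [Real.div_rpow hpR.le (by norm_num), Real.rpow_neg (by norm_num)]
                ring
              have h3 : (2:ℝ)^(-s) ≤ K₂ := le_max_right _ _
              calc (n:ℝ)^s ≤ ((p:ℝ)/2)^s := h1
                _ = (2:ℝ)^(-s) * (p:ℝ)^s := by rw [h2]; ring
                _ ≤ K₂ * (p:ℝ)^s := mul_le_mul_of_nonneg_right h3 hps
          have hσe : (p:ℝ)^σ = (p:ℝ)^s / (p:ℝ)^(α-1) := by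
            rw [show σ = s - (α-1) by rw [hσdef]; ring, Real.rpow_sub hpR]
          have hRHSe : (K₂/c') * ((p:ℝ)^σ * (1/((p:ℝ) - n)))
              = (K₂ * (p:ℝ)^s) / (c' * ((p:ℝ) - n) * (p:ℝ)^(α-1)) := by
            rw [hσe]
            have h1 : (p:ℝ) - n ≠ 0 := by linarith
            have h2 : (p:ℝ)^(α-1) ≠ 0 := hpα1.ne'
            field_simp
          have hstep : (n:ℝ)^s / (c' * ((p:ℝ) - n) * (p:ℝ)^(α-1))
              ≤ (K₂/c') * ((p:ℝ)^σ * (1/((p:ℝ) - n))) := by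
            rw [hRHSe]
            exact div_le_div_of_nonneg_right hK₂b hden2.le
          have hfin := hfb.trans hstep
          rw [hT2v, hcast]
          have := hT1nn n; have := hT3nn n; have := hT4nn n
          linarith
      · -- p < n : use hd1
        have hgtR : (p:ℝ) < n := by exact_mod_cast hgt
        rw [abs_of_pos (by linarith : (0:ℝ) < (n:ℝ) - p)] at hd1
        have hden1 : (0:ℝ) < c' * ((n:ℝ) - p) * (n:ℝ)^(α-1) := by
          have h1 : (0:ℝ) < (n:ℝ) - p := by linarith
          positivity
        have hfb : (n:ℝ)^s / |hfun n - hfun p| ≤ (n:ℝ)^s / (c' * ((n:ℝ) - p) * (n:ℝ)^(α-1)) :=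
          div_le_div_of_nonneg_left hnum hden1 hd1
        have hnσe : (n:ℝ)^σ = (n:ℝ)^s / (n:ℝ)^(α-1) := by
          rw [show σ = s - (α-1) by rw [hσdef]; ring, Real.rpow_sub hnR0]
        rcases le_or_gt n (2*p) with hsp | hsp
        · -- T3 case
          have hT3v : T3 n = (1/c') * ((p:ℝ)^σ * (1/((n - p : ℕ):ℝ))) := by
            rw [hT3]; dsimp only; rw [if_pos ⟨hgt, hsp⟩]
          have hcast : ((n - p : ℕ):ℝ) = (n:ℝ) - p := by
            push_cast [Nat.cast_sub hgt.le]
            ring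
          have hLHSe : (n:ℝ)^s / (c' * ((n:ℝ) - p) * (n:ℝ)^(α-1))
              = (1/c') * ((n:ℝ)^σ * (1/((n:ℝ) - p))) := by
            rw [hnσe]
            have h1 : (n:ℝ) - p ≠ 0 := by linarith
            have h2 : (n:ℝ)^(α-1) ≠ 0 := hnα1.ne'
            field_simp
            try ring
            try exact Or.inl trivial
          have hmono : (n:ℝ)^σ ≤ (p:ℝ)^σ := Real.rpow_le_rpow_of_nonpos hpR hgtR.le hσ.le
          have hstep : (1/c') * ((n:ℝ)^σ * (1/((n:ℝ) - p)))
              ≤ (1/c') * ((p:ℝ)^σ * (1/((n:ℝ) - p))) := by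
            have h1 : (0:ℝ) < (n:ℝ) - p := by linarith
            have h2 : (0:ℝ) ≤ 1/((n:ℝ) - p) := by positivity
            have h3 : (0:ℝ) ≤ 1/c' := by positivity
            apply mul_le_mul_of_nonneg_left _ h3
            exact mul_le_mul_of_nonneg_right hmono h2
          have hfin := (hfb.trans_eq hLHSe).trans hstep
          rw [hT3v, hcast]
          have := hT1nn n; have := hT2nn n; have := hT4nn n
          linarith
        · -- T4 case
          have hT4v : T4 n = (2/c') * ((n:ℝ)^(σ-1)) := by
            rw [hT4]; dsimp only; rw [if_pos hsp]
          have h2pR : 2*(p:ℝ) < n := by exact_mod_cast hsp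
          have hden3 : (0:ℝ) < c' * ((n:ℝ)/2) * (n:ℝ)^(α-1) := by positivity
          have hstep1 : (n:ℝ)^s / (c' * ((n:ℝ) - p) * (n:ℝ)^(α-1))
              ≤ (n:ℝ)^s / (c' * ((n:ℝ)/2) * (n:ℝ)^(α-1)) := by
            apply div_le_div_of_nonneg_left hnum hden3
            have h1 : (n:ℝ)/2 ≤ (n:ℝ) - p := by linarith
            exact mul_le_mul_of_nonneg_right (mul_le_mul_of_nonneg_left h1 hc'.le) hnα1.le
          have hnpow : (n:ℝ)^α = (n:ℝ)^(α-1) * n := by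
            rw [← Real.rpow_add_one hnR0.ne' (α-1)]
            norm_num
          have hσ1e : (n:ℝ)^(σ-1) = (n:ℝ)^s / ((n:ℝ)^(α-1) * n) := by
            rw [show σ - 1 = s - α by rw [hσdef]; ring, Real.rpow_sub hnR0, hnpow]
          have hstep2 : (n:ℝ)^s / (c' * ((n:ℝ)/2) * (n:ℝ)^(α-1))
              = (2/c') * ((n:ℝ)^(σ-1)) := by
            rw [hσ1e]
            field_simp
          have hfin := (hfb.trans hstep1).trans_eq hstep2
          rw [hT4v]
          have := hT1nn n; have := hT2nn n; have := hT3nn n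
          linarith
  -- sum bounds
  have hS1 : ∀ N, ∑ n ∈ Finset.range N, T1 n
      ≤ (2/c') * ((p:ℝ)^(-α) * (K₀ * ((p:ℝ)^(s+1) * (1 + L) + 1))) := by
    intro N
    have e1 : ∑ n ∈ Finset.range N, T1 n
        = ∑ n ∈ (Finset.range N).filter (fun n => 1 ≤ n ∧ 2*n ≤ p),
            (2/c') * ((n:ℝ)^s * (p:ℝ)^(-α)) := by
      rw [hT1, Finset.sum_filter]
    rw [e1]
    have e2 : ∑ n ∈ (Finset.range N).filter (fun n => 1 ≤ n ∧ 2*n ≤ p),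
          (2/c') * ((n:ℝ)^s * (p:ℝ)^(-α))
        ≤ ∑ n ∈ Finset.Icc 1 p, (2/c') * ((n:ℝ)^s * (p:ℝ)^(-α)) := by
      apply Finset.sum_le_sum_of_subset_of_nonneg
      · intro x hx
        simp only [Finset.mem_filter, Finset.mem_range] at hx
        simp only [Finset.mem_Icc]
        omega
      · intro i _ _
        positivity
    refine e2.trans ?_
    have e3 : ∀ n : ℕ, (2/c') * ((n:ℝ)^s * (p:ℝ)^(-α))
        = ((2/c') * (p:ℝ)^(-α)) * (n:ℝ)^s := fun n => by ring
    simp only [e3]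
    rw [← Finset.mul_sum]
    have hb := hK₀b p (by omega)
    calc ((2/c') * (p:ℝ)^(-α)) * ∑ n ∈ Finset.Icc 1 p, ((n:ℝ))^s
        ≤ ((2/c') * (p:ℝ)^(-α)) * (K₀ * ((p:ℝ)^(s+1) * (1 + Real.log p) + 1)) := by
          have hnn : (0:ℝ) ≤ (2/c') * (p:ℝ)^(-α) := by positivity
          exact mul_le_mul_of_nonneg_left hb hnn
      _ = (2/c') * ((p:ℝ)^(-α) * (K₀ * ((p:ℝ)^(s+1) * (1 + L) + 1))) := by
          rw [hLdef]; ring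
  have hS2 : ∀ N, ∑ n ∈ Finset.range N, T2 n ≤ (K₂/c') * ((p:ℝ)^σ * (1 + L)) := by
    intro N
    have e1 : ∑ n ∈ Finset.range N, T2 n
        = ∑ n ∈ (Finset.range N).filter (fun n => p < 2*n ∧ n < p),
            (K₂/c') * ((p:ℝ)^σ * (1/((p - n : ℕ):ℝ))) := by
      rw [hT2, Finset.sum_filter]
    rw [e1]
    set F := (Finset.range N).filter (fun n => p < 2*n ∧ n < p) with hF
    have e3 : ∀ n : ℕ, (K₂/c') * ((p:ℝ)^σ * (1/((p - n : ℕ):ℝ)))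
        = ((K₂/c') * (p:ℝ)^σ) * (1/((p - n : ℕ):ℝ)) := fun n => by ring
    simp only [e3]
    rw [← Finset.mul_sum]
    have hharm : ∑ n ∈ F, (1/((p - n : ℕ):ℝ)) ≤ 1 + Real.log p := by
      have hinj : ∀ x ∈ F, ∀ y ∈ F, p - x = p - y → x = y := by
        intro x hx y hy hxy
        rw [hF] at hx hy
        simp only [Finset.mem_filter, Finset.mem_range] at hx hy
        omega
      have himg : ∑ k ∈ F.image (fun n => p - n), (1/(k:ℝ)) = ∑ n ∈ F, (1/((p - n : ℕ):ℝ)) :=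
        Finset.sum_image hinj
      rw [← himg]
      refine le_trans ?_ (aux_harm p)
      apply Finset.sum_le_sum_of_subset_of_nonneg
      · intro k hk
        simp only [Finset.mem_image, hF, Finset.mem_filter, Finset.mem_range] at hk
        obtain ⟨n, hn, rfl⟩ := hk
        simp only [Finset.mem_Icc]
        omega
      · intro i _ _
        positivity
    calc ((K₂/c') * (p:ℝ)^σ) * ∑ n ∈ F, (1/((p - n : ℕ):ℝ))
        ≤ ((K₂/c') * (p:ℝ)^σ) * (1 + Real.log p) := by
          have hnn : (0:ℝ) ≤ (K₂/c') * (p:ℝ)^σ := by positivity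
          exact mul_le_mul_of_nonneg_left hharm hnn
      _ = (K₂/c') * ((p:ℝ)^σ * (1 + L)) := by rw [hLdef]; ring
  have hS3 : ∀ N, ∑ n ∈ Finset.range N, T3 n ≤ (1/c') * ((p:ℝ)^σ * (1 + L)) := by
    intro N
    have e1 : ∑ n ∈ Finset.range N, T3 n
        = ∑ n ∈ (Finset.range N).filter (fun n => p < n ∧ n ≤ 2*p),
            (1/c') * ((p:ℝ)^σ * (1/((n - p : ℕ):ℝ))) := by
      rw [hT3, Finset.sum_filter]
    rw [e1]
    set F := (Finset.range N).filter (fun n => p < n ∧ n ≤ 2*p) with hF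
    have e3 : ∀ n : ℕ, (1/c') * ((p:ℝ)^σ * (1/((n - p : ℕ):ℝ)))
        = ((1/c') * (p:ℝ)^σ) * (1/((n - p : ℕ):ℝ)) := fun n => by ring
    simp only [e3]
    rw [← Finset.mul_sum]
    have hharm : ∑ n ∈ F, (1/((n - p : ℕ):ℝ)) ≤ 1 + Real.log p := by
      have hinj : ∀ x ∈ F, ∀ y ∈ F, x - p = y - p → x = y := by
        intro x hx y hy hxy
        rw [hF] at hx hy
        simp only [Finset.mem_filter, Finset.mem_range] at hx hy
        omega
      have himg : ∑ k ∈ F.image (fun n => n - p), (1/(k:ℝ)) = ∑ n ∈ F, (1/((n - p : ℕ):ℝ)) :=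
        Finset.sum_image hinj
      rw [← himg]
      refine le_trans ?_ (aux_harm p)
      apply Finset.sum_le_sum_of_subset_of_nonneg
      · intro k hk
        simp only [Finset.mem_image, hF, Finset.mem_filter, Finset.mem_range] at hk
        obtain ⟨n, hn, rfl⟩ := hk
        simp only [Finset.mem_Icc]
        omega
      · intro i _ _
        positivity
    calc ((1/c') * (p:ℝ)^σ) * ∑ n ∈ F, (1/((n - p : ℕ):ℝ))
        ≤ ((1/c') * (p:ℝ)^σ) * (1 + Real.log p) := by
          have hnn : (0:ℝ) ≤ (1/c') * (p:ℝ)^σ := by positivity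
          exact mul_le_mul_of_nonneg_left hharm hnn
      _ = (1/c') * ((p:ℝ)^σ * (1 + L)) := by rw [hLdef]; ring
  have hS4 : ∀ N, ∑ n ∈ Finset.range N, T4 n ≤ (2/c') * ((p:ℝ)^σ / (-σ)) := by
    intro N
    have e1 : ∑ n ∈ Finset.range N, T4 n
        = ∑ n ∈ (Finset.range N).filter (fun n => 2*p < n), (2/c') * ((n:ℝ)^(σ-1)) := by
      rw [hT4, Finset.sum_filter]
    rw [e1, ← Finset.mul_sum]
    have htail := aux_tail_range σ hσ (2*p) (by omega) N
    have hmono : ((2*p : ℕ):ℝ)^σ ≤ (p:ℝ)^σ := by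
      apply Real.rpow_le_rpow_of_nonpos hpR _ hσ.le
      push_cast
      linarith
    have h2 : ∑ n ∈ (Finset.range N).filter (fun n => 2*p < n), ((n:ℝ))^(σ-1)
        ≤ (p:ℝ)^σ / (-σ) := by
      refine htail.trans ?_
      gcongr
    have hnn : (0:ℝ) ≤ 2/c' := by positivity
    exact mul_le_mul_of_nonneg_left h2 hnn
  -- assemble
  have hpσ : (0:ℝ) < (p:ℝ)^σ := Real.rpow_pos_of_pos hpR σ
  have hpα : (0:ℝ) < (p:ℝ)^(-α) := Real.rpow_pos_of_pos hpR (-α)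
  have hid : (p:ℝ)^(-α) * (p:ℝ)^(s+1) = (p:ℝ)^σ := by
    rw [← Real.rpow_add hpR, hσdef]; ring_nf
  apply Real.tsum_le_of_sum_range_le
  · intro n
    split
    · exact le_rfl
    · positivity
  intro N
  calc ∑ n ∈ Finset.range N, (if n = 0 ∨ n = p then 0 else (n : ℝ) ^ s / |hfun n - hfun p|)
      ≤ ∑ n ∈ Finset.range N, (T1 n + T2 n + T3 n + T4 n) := Finset.sum_le_sum (fun n _ => key n)
    _ = ∑ n ∈ Finset.range N, T1 n + ∑ n ∈ Finset.range N, T2 n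
        + ∑ n ∈ Finset.range N, T3 n + ∑ n ∈ Finset.range N, T4 n := by
        simp [Finset.sum_add_distrib]
    _ ≤ (2/c') * ((p:ℝ)^(-α) * (K₀ * ((p:ℝ)^(s+1) * (1 + L) + 1)))
        + (K₂/c') * ((p:ℝ)^σ * (1 + L)) + (1/c') * ((p:ℝ)^σ * (1 + L))
        + (2/c') * ((p:ℝ)^σ / (-σ)) := by
        exact add_le_add (add_le_add (add_le_add (hS1 N) (hS2 N)) (hS3 N)) (hS4 N)
    _ ≤ K * ((p:ℝ)^σ * (1 + L) + (p:ℝ)^(-α)) := by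
        have hL1 : (1:ℝ) ≤ 1 + L := by rw [hLdef]; linarith
        have e1 : (2/c') * ((p:ℝ)^(-α) * (K₀ * ((p:ℝ)^(s+1) * (1 + L) + 1)))
            = (2*K₀/c') * ((p:ℝ)^σ * (1 + L)) + (2*K₀/c') * (p:ℝ)^(-α) := by
          have : (p:ℝ)^(-α) * (K₀ * ((p:ℝ)^(s+1) * (1 + L) + 1))
              = K₀ * (((p:ℝ)^(-α) * (p:ℝ)^(s+1)) * (1 + L)) + K₀ * (p:ℝ)^(-α) := by ring
          rw [this, hid]; ring
        have e4 : (2/c') * ((p:ℝ)^σ / (-σ)) ≤ ((2/(-σ))/c') * ((p:ℝ)^σ * (1 + L)) := by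
          have h1 : (2/c') * ((p:ℝ)^σ / (-σ)) = ((2/(-σ))/c') * ((p:ℝ)^σ * 1) := by
            field_simp
          rw [h1]
          have hnn : (0:ℝ) ≤ (2/(-σ))/c' := by positivity
          have h2 : (p:ℝ)^σ * 1 ≤ (p:ℝ)^σ * (1 + L) := by
            apply mul_le_mul_of_nonneg_left hL1 hpσ.le
          exact mul_le_mul_of_nonneg_left h2 hnn
        have hKe : K = (2*K₀/c') + (K₂/c') + (1/c') + ((2/(-σ))/c') := by
          rw [hKdef]; ring
        have hslack : (2*K₀/c') ≤ K := by
          rw [hKe]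
          have h1 : (0:ℝ) < K₂/c' := by positivity
          have h2 : (0:ℝ) < 1/c' := by positivity
          have h3 : (0:ℝ) < (2/(-σ))/c' := by positivity
          linarith
        have hAnn : (0:ℝ) ≤ (p:ℝ)^σ * (1 + L) := by positivity
        rw [e1, hKe]
        have h5 : (0:ℝ) ≤ (K₂/c') * (p:ℝ)^(-α) := by positivity
        have h6 : (0:ℝ) ≤ (1/c') * (p:ℝ)^(-α) := by positivity
        have h7 : (0:ℝ) ≤ ((2/(-σ))/c') * (p:ℝ)^(-α) := by positivity
        linarith only [e4, h5, h6, h7]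
    _ ≤ K * (1 + 1/Real.log 2) * ((p:ℝ)^σ * L + (p:ℝ)^(-α)) := by
        have h1 : 1 + L ≤ (1 + 1/Real.log 2) * L := by
          have h2 : (1:ℝ) ≤ (1/Real.log 2) * L := by
            rw [one_div, inv_mul_eq_div, le_div_iff₀ hlog2]
            rw [hLdef]; linarith
          calc 1 + L ≤ (1/Real.log 2) * L + L := by linarith only [h2]
            _ = (1 + 1/Real.log 2) * L := by ring
        have h3 : (p:ℝ)^σ * (1 + L) ≤ (p:ℝ)^σ * ((1 + 1/Real.log 2) * L) :=
          mul_le_mul_of_nonneg_left h1 hpσ.le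
        have h4 : (p:ℝ)^(-α) ≤ (1 + 1/Real.log 2) * (p:ℝ)^(-α) := by
          have : (1:ℝ) ≤ 1 + 1/Real.log 2 := by
            have : (0:ℝ) < 1/Real.log 2 := by positivity
            linarith
          nlinarith
        have e : K * (1 + 1/Real.log 2) * ((p:ℝ)^σ * L + (p:ℝ)^(-α))
            = K * ((p:ℝ)^σ * ((1 + 1/Real.log 2) * L) + (1 + 1/Real.log 2) * (p:ℝ)^(-α)) := by
          ring
        rw [e]
        apply mul_le_mul_of_nonneg_left _ hK.le
        linarith
end
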